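/- Let c : ℝ^d → ℝ be convex and differentiable with ‖∇c(x)‖₂ ≥ ρ > 0 whenever c(x) = 0, suppose there exists x₀ with c(x₀) < 0, let x̂ satisfy c(x̂) > 0, and let x̃ be the Euclidean projection of x̂ onto {x : c(x) ≤ 0}. Then c(x̂) ≥ ρ ‖x̂ − x̃‖₂. -/

import Mathlib

open scoped BigOperators

open Filter Set Topology

/-- Directional derivative of a differentiable function along a line, via the gradient. -/
lemma line_hasDerivAt {d : ℕ} (c : EuclideanSpace ℝ (Fin d) → ℝ)
    (hdiff : Differentiable ℝ c) (x v : EuclideanSpace ℝ (Fin d)) :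
    HasDerivAt (fun t : ℝ => c (x + t • v)) (inner ℝ (gradient c x) v : ℝ) 0 := by
  have h1 : HasDerivAt (fun t : ℝ => x + t • v) v 0 := by
    simpa using ((hasDerivAt_id (0:ℝ)).smul_const v).const_add x
  have h2 : HasFDerivAt c ((InnerProductSpace.toDual ℝ _) (gradient c x)) x :=
    (hdiff x).hasGradientAt
  have h3 : HasFDerivAt c ((InnerProductSpace.toDual ℝ _) (gradient c x)) ((fun t : ℝ => x + t • v) 0) := by
    simpa using h2
  exact h3.comp_hasDerivAt 0 h1

/-- Gradient inequality for convex differentiable functions. -/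
lemma convex_gradient_ineq {d : ℕ} (c : EuclideanSpace ℝ (Fin d) → ℝ)
    (hconv : ConvexOn ℝ Set.univ c) (hdiff : Differentiable ℝ c)
    (x y : EuclideanSpace ℝ (Fin d)) :
    (inner ℝ (gradient c x) (y - x) : ℝ) ≤ c y - c x := by
  set f : ℝ → ℝ := fun t => c (x + t • (y - x)) with hf
  have hd : HasDerivAt f (inner ℝ (gradient c x) (y - x) : ℝ) 0 :=
    line_hasDerivAt c hdiff x (y - x)
  have hslope : Tendsto (slope f 0) (𝓝[>] 0) (𝓝 (inner ℝ (gradient c x) (y - x) : ℝ)) :=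
    (hasDerivAt_iff_tendsto_slope.mp hd).mono_left
      (nhdsWithin_mono _ (fun t ht => ne_of_gt ht))
  refine le_of_tendsto hslope ?_
  filter_upwards [Ioo_mem_nhdsGT_of_mem (by norm_num : (0:ℝ) ∈ Ico 0 1)] with t ht
  obtain ⟨ht0, ht1⟩ := ht
  have hxy : x + t • (y - x) = (1 - t) • x + t • y := by module
  have hcomb : f t ≤ (1 - t) * c x + t * c y := by
    have := hconv.2 (mem_univ x) (mem_univ y) (by linarith : (0:ℝ) ≤ 1 - t)
      (le_of_lt ht0) (by ring)
    simpa [hf, hxy, smul_eq_mul] using this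
  have hf0 : f 0 = c x := by simp [hf]
  rw [slope_def_field, sub_zero, div_le_iff₀ ht0, hf0]
  nlinarith
theorem stmt_11 {d : ℕ} (ρ : ℝ) (hρ : 0 < ρ)
    (c : EuclideanSpace ℝ (Fin d) → ℝ)
    (hconv : ConvexOn ℝ Set.univ c) (hdiff : Differentiable ℝ c)
    (hgrad : ∀ x : EuclideanSpace ℝ (Fin d), c x = 0 → ρ ≤ ‖gradient c x‖)
    (x₀ : EuclideanSpace ℝ (Fin d)) (hx₀ : c x₀ < 0)
    (xhat : EuclideanSpace ℝ (Fin d)) (hxhat : 0 < c xhat)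
    (xtilde : EuclideanSpace ℝ (Fin d))
    (hfeas : c xtilde ≤ 0)
    (hproj : ∀ y : EuclideanSpace ℝ (Fin d), c y ≤ 0 → ‖xtilde - xhat‖ ≤ ‖y - xhat‖) :
    ρ * ‖xhat - xtilde‖ ≤ c xhat := by
  set u := xhat - xtilde with hu
  have hune : xhat ≠ xtilde := fun h => by rw [h] at hxhat; linarith
  have hunorm : 0 < ‖u‖ := by simpa [hu, sub_ne_zero] using hune
  have hnormrev : ‖xtilde - xhat‖ = ‖u‖ := by rw [hu, norm_sub_rev]
  -- step 1: c xtilde = 0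
  have hct : c xtilde = 0 := by
    by_contra h
    have hlt : c xtilde < 0 := lt_of_le_of_ne hfeas h
    have hcont : ContinuousAt (fun t : ℝ => c (xtilde + t • u)) 0 :=
      (hdiff.continuous.comp (by continuity)).continuousAt
    have hev : ∀ᶠ t : ℝ in 𝓝 0, c (xtilde + t • u) < 0 := by
      have h0 : (fun t : ℝ => c (xtilde + t • u)) 0 < 0 := by simpa using hlt
      exact hcont.eventually_lt continuousAt_const h0
    have hev2 : ∀ᶠ t : ℝ in 𝓝[>] 0, c (xtilde + t • u) < 0 ∧ t ∈ Ioo (0:ℝ) 1 := by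
      filter_upwards [hev.filter_mono nhdsWithin_le_nhds,
        Ioo_mem_nhdsGT_of_mem (by norm_num : (0:ℝ) ∈ Ico (0:ℝ) 1)] with t h1 h2
      exact ⟨h1, h2⟩
    obtain ⟨t, htc, ht0, ht1⟩ := hev2.exists
    have := hproj _ (le_of_lt htc)
    have hdist : ‖xtilde + t • u - xhat‖ = (1 - t) * ‖u‖ := by
      have : xtilde + t • u - xhat = (t - 1) • u := by rw [hu]; module
      rw [this, norm_smul, Real.norm_eq_abs, abs_of_neg (by linarith)]
      ring_nf
    rw [hnormrev, hdist] at this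
    nlinarith
  set g := gradient c xtilde with hg
  have hgρ : ρ ≤ ‖g‖ := hgrad xtilde hct
  have hgnorm : 0 < ‖g‖ := lt_of_lt_of_le hρ hgρ
  -- step 2: directions with negative gradient pairing have nonpositive inner with u
  have key : ∀ z : EuclideanSpace ℝ (Fin d), (inner ℝ g z : ℝ) < 0 → (inner ℝ z u : ℝ) ≤ 0 := by
    intro z hz
    set f : ℝ → ℝ := fun t => c (xtilde + t • z) with hf
    have hd : HasDerivAt f (inner ℝ g z : ℝ) 0 := line_hasDerivAt c hdiff xtilde z
    have hslope : Tendsto (slope f 0) (𝓝[>] 0) (𝓝 (inner ℝ g z : ℝ)) :=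
      (hasDerivAt_iff_tendsto_slope.mp hd).mono_left
        (nhdsWithin_mono _ (fun t ht => ne_of_gt ht))
    have hev : ∀ᶠ t : ℝ in 𝓝[>] 0, slope f 0 t < 0 :=
      hslope.eventually_lt_const hz
    have hev2 : ∀ᶠ t : ℝ in 𝓝[>] 0, (inner ℝ z u : ℝ) ≤ t * ‖z‖ ^ 2 / 2 := by
      filter_upwards [hev, self_mem_nhdsWithin] with t hts (ht0 : 0 < t)
      have hf0 : f 0 = 0 := by simpa [hf] using hct
      rw [slope_def_field, hf0, sub_zero, sub_zero, div_neg_iff] at hts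
      have hft : f t < 0 := by
        rcases hts with ⟨h1, h2⟩ | ⟨h1, h2⟩
        · linarith
        · exact h1
      have hp := hproj _ (le_of_lt hft)
      have hrw : xtilde + t • z - xhat = t • z - u := by rw [hu]; module
      rw [hnormrev, hrw] at hp
      have hsq : ‖u‖ ^ 2 ≤ ‖t • z - u‖ ^ 2 := by
        have := pow_le_pow_left₀ (norm_nonneg u) hp 2
        simpa using this
      have hexp : ‖t • z - u‖ ^ 2 = t ^ 2 * ‖z‖ ^ 2 - 2 * t * (inner ℝ z u : ℝ) + ‖u‖ ^ 2 := by
        rw [norm_sub_sq_real, norm_smul, real_inner_smul_left]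
        rw [Real.norm_eq_abs, abs_of_pos ht0]
        ring
      rw [hexp] at hsq
      rw [le_div_iff₀ (by norm_num : (0:ℝ) < 2)]
      nlinarith [mul_pos ht0 ht0, sq_nonneg t]
    have hlim : Tendsto (fun t : ℝ => t * ‖z‖ ^ 2 / 2) (𝓝[>] 0) (𝓝 0) := by
      have : Tendsto (fun t : ℝ => t * ‖z‖ ^ 2 / 2) (𝓝 0) (𝓝 (0 * ‖z‖ ^ 2 / 2)) := by
        exact (tendsto_id.mul tendsto_const_nhds).div_const 2
      simpa using this.mono_left nhdsWithin_le_nhds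
    exact ge_of_tendsto hlim hev2
  -- step 3: inner ℝ g u ≥ ‖g‖ * ‖u‖
  have hgu : ‖g‖ * ‖u‖ ≤ (inner ℝ g u : ℝ) := by
    by_contra hcon
    push_neg at hcon
    set z := ‖g‖ • u - ‖u‖ • g with hz
    have h1 : (inner ℝ g z : ℝ) < 0 := by
      rw [hz, inner_sub_right, real_inner_smul_right, real_inner_smul_right,
        real_inner_self_eq_norm_sq]
      nlinarith
    have h2 := key z h1
    rw [hz, inner_sub_left, real_inner_smul_left, real_inner_smul_left,
      real_inner_self_eq_norm_sq, real_inner_comm] at h2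
    have hcomm : (inner ℝ u g : ℝ) = inner ℝ g u := (real_inner_comm u g).symm
    nlinarith [mul_pos hunorm (sub_pos.mpr hcon)]
  -- step 4: convexity
  have hconvineq := convex_gradient_ineq c hconv hdiff xtilde xhat
  rw [hct, sub_zero] at hconvineq
  have : ρ * ‖u‖ ≤ ‖g‖ * ‖u‖ := mul_le_mul_of_nonneg_right hgρ (norm_nonneg u)
  calc ρ * ‖xhat - xtilde‖ = ρ * ‖u‖ := by rw [hu]
    _ ≤ (inner ℝ g u : ℝ) := le_trans this hgu
    _ ≤ c xhat := by rw [hu] at *; exact hconvineq
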